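/- In a finite graded poset satisfying the left-covering condition and possessing a unique minimal element, any two maximal chains can be connected by a finite discrete homotopy, i.e., a finite sequence of maximal chains in which consecutive chains differ at exactly one position. -/

import Mathlib

/-- The left-covering condition: any two distinct elements covering a common element
have a common upper cover. -/
def LeftCovering (P : Type*) [PartialOrder P] : Prop :=
  ∀ z0 z1 z2 : P, z0 ⋖ z1 → z0 ⋖ z2 → z1 ≠ z2 → ∃ z3 : P, z1 ⋖ z3 ∧ z2 ⋖ z3

/-- A maximal chain of length `n` in a poset with a least element: a saturated chain
starting at the bottom and ending at a maximal element. -/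
structure MaxChain (P : Type*) [PartialOrder P] [OrderBot P] (n : ℕ) where
  toFun : Fin (n + 1) → P
  first : toFun 0 = ⊥
  step : ∀ i : Fin n, toFun i.castSucc ⋖ toFun i.succ
  last_max : IsMax (toFun (Fin.last n))

/-- Two maximal chains are adjacent if they differ at exactly one position. -/
def MaxChain.Adjacent {P : Type*} [PartialOrder P] [OrderBot P] {n : ℕ}
    (c c' : MaxChain P n) : Prop :=
  ∃! i : Fin (n + 1), c.toFun i ≠ c'.toFun i

section Aux

variable {P : Type*} [PartialOrder P]

/-- There is a saturated chain of length `k` from `x` to a maximal element. -/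
def UpChain (x : P) (k : ℕ) : Prop :=
  ∃ c : ℕ → P, c 0 = x ∧ (∀ i < k, c i ⋖ c (i + 1)) ∧ IsMax (c k)

theorem upchain_step (hlc : LeftCovering P) :
    ∀ k (x y : P), x ⋖ y → UpChain x (k + 1) → UpChain y k := by
  intro k
  induction k with
  | zero =>
    rintro x y hxy ⟨c, hc0, hstep, hmax⟩
    have h1 : x ⋖ c 1 := by rw [← hc0]; exact hstep 0 (by omega)
    by_cases hy : c 1 = y
    · exact ⟨fun _ => y, rfl, fun i hi => by omega, hy ▸ hmax⟩
    · obtain ⟨z3, h3, _⟩ := hlc x (c 1) y h1 hxy hy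
      exact absurd (hmax (show c 1 < z3 from h3.lt).le) (show c 1 < z3 from h3.lt).not_ge
  | succ k ih =>
    rintro x y hxy ⟨c, hc0, hstep, hmax⟩
    have h1 : x ⋖ c 1 := by rw [← hc0]; exact hstep 0 (by omega)
    by_cases hy : c 1 = y
    · refine ⟨fun i => c (i + 1), hy, fun i hi => hstep (i + 1) (by omega), hmax⟩
    · obtain ⟨z3, h3, hy3⟩ := hlc x (c 1) y h1 hxy hy
      have hup1 : UpChain (c 1) (k + 1) :=
        ⟨fun i => c (i + 1), rfl, fun i hi => hstep (i + 1) (by omega), hmax⟩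
      obtain ⟨e, he0, hes, hem⟩ := ih (c 1) z3 h3 hup1
      refine ⟨fun i => if i = 0 then y else e (i - 1), rfl, fun i hi => ?_, by
        simp only [Nat.succ_ne_zero, if_false]; simpa using hem⟩
      rcases Nat.eq_zero_or_pos i with h0 | h0
      · subst h0; simpa [he0] using hy3
      · obtain ⟨j, rfl⟩ := Nat.exists_eq_add_of_le h0
        simp only [Nat.add_comm 1 j]
        have : j + 1 ≠ 0 := by omega
        simp only [this, if_false, Nat.add_sub_cancel]
        have : j + 1 + 1 ≠ 0 := by omega
        simp only [this, if_false, Nat.add_sub_cancel]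
        exact hes j (by omega)

variable [OrderBot P]

theorem toFun_congr {n : ℕ} (F : MaxChain P n) {a b : ℕ} (h : a < n + 1) (h' : b < n + 1)
    (hab : a = b) : F.toFun ⟨a, h⟩ = F.toFun ⟨b, h'⟩ := by subst hab; rfl

theorem maxChain_upchain {n : ℕ} (F : MaxChain P n) (t : ℕ) (ht : t ≤ n) :
    UpChain (F.toFun ⟨t, by omega⟩) (n - t) := by
  have hb : ∀ j : ℕ, min (t + j) n < n + 1 := fun j => Nat.lt_succ_of_le (min_le_right _ _)
  refine ⟨fun j => F.toFun ⟨min (t + j) n, hb j⟩, ?_, ?_, ?_⟩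
  · exact toFun_congr F _ (by omega) (by rw [Nat.add_zero]; exact Nat.min_eq_left ht)
  · intro j hj
    show F.toFun ⟨min (t + j) n, hb j⟩ ⋖ F.toFun ⟨min (t + (j + 1)) n, hb (j + 1)⟩
    rw [toFun_congr F (hb j) (show t + j < n + 1 by omega) (Nat.min_eq_left (by omega)),
      toFun_congr F (hb (j + 1)) (show t + j + 1 < n + 1 by omega)
        (Nat.min_eq_left (by omega))]
    exact F.step ⟨t + j, by omega⟩
  · show IsMax (F.toFun ⟨min (t + (n - t)) n, hb _⟩)
    have h2 : F.toFun ⟨min (t + (n - t)) n, hb _⟩ = F.toFun (Fin.last n) :=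
      toFun_congr F _ (Nat.lt_succ_self n) (Nat.min_eq_right (by omega))
    rw [h2]; exact F.last_max

theorem MaxChain.ext' {n : ℕ} {F F' : MaxChain P n}
    (h : ∀ i, F.toFun i = F'.toFun i) : F = F' := by
  cases F; cases F'; congr 1; funext i; exact h i

theorem adj_symm {n : ℕ} : Symmetric (MaxChain.Adjacent (P := P) (n := n)) := by
  rintro c c' ⟨i, hi, hu⟩
  exact ⟨i, Ne.symm hi, fun j hj => hu j (Ne.symm hj)⟩

/-- Build a `MaxChain` from data indexed by `ℕ`. -/
def ofNatFun {n : ℕ} (c : ℕ → P) (h0 : c 0 = ⊥) (hs : ∀ i < n, c i ⋖ c (i + 1))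
    (hm : IsMax (c n)) : MaxChain P n where
  toFun := fun j => c j
  first := by simpa using h0
  step := fun i => hs i.val i.isLt
  last_max := by simpa using hm

theorem key (hlc : LeftCovering P) (n : ℕ) :
    ∀ d (F F' : MaxChain P n),
      (∀ j : Fin (n + 1), (j : ℕ) + d ≤ n → F.toFun j = F'.toFun j) →
        Relation.ReflTransGen MaxChain.Adjacent F F' := by
  intro d
  induction d with
  | zero =>
    intro F F' h
    have : F = F' := MaxChain.ext' fun i => h i (by have := i.isLt; omega)
    rw [this]
  | succ d ih =>
    intro F F' h
    by_cases hd : n ≤ d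
    · apply ih
      intro j hj
      have hj0 : j = 0 := Fin.ext (by have := j.isLt; simp only [Fin.val_zero]; omega)
      rw [hj0, F.first, F'.first]
    · have hdn : d < n := not_le.mp hd
      by_cases heq : F.toFun ⟨n - d, by omega⟩ = F'.toFun ⟨n - d, by omega⟩
      · apply ih
        intro j hj
        rcases Nat.lt_or_ge (j : ℕ) (n - d) with h1 | h1
        · exact h j (by omega)
        · have hjv : j = (⟨n - d, by omega⟩ : Fin (n + 1)) := Fin.ext (by simp; omega)
          rw [hjv]; exact heq
      · -- the interesting case
        set i : ℕ := n - d - 1 with hidef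
        have hi1 : i + 1 = n - d := by omega
        have hiless : i < n := by omega
        have hFi : F.toFun ⟨i, by omega⟩ = F'.toFun ⟨i, by omega⟩ :=
          h ⟨i, by omega⟩ (by simp; omega)
        have cover1 : F.toFun ⟨i, by omega⟩ ⋖ F.toFun ⟨i + 1, by omega⟩ :=
          F.step ⟨i, hiless⟩
        have cover2 : F.toFun ⟨i, by omega⟩ ⋖ F'.toFun ⟨i + 1, by omega⟩ := by
          rw [hFi]; exact F'.step ⟨i, hiless⟩
        have hne : F.toFun ⟨i + 1, by omega⟩ ≠ F'.toFun ⟨i + 1, by omega⟩ := by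
          rw [toFun_congr F (by omega) (by omega) hi1, toFun_congr F' (by omega) (by omega) hi1]
          exact heq
        obtain ⟨z3, h13, h23⟩ := hlc _ _ _ cover1 cover2 hne
        have hlt : i + 1 < n := by
          rcases Nat.lt_or_ge (i + 1) n with h' | h'
          · exact h'
          · exfalso
            have he : i + 1 = n := by omega
            have : F.toFun ⟨i + 1, by omega⟩ = F.toFun (Fin.last n) :=
              toFun_congr F _ _ he
            exact absurd (this ▸ F.last_max $ (show F.toFun ⟨i + 1, by omega⟩ < z3 from h13.lt).le)
              (show F.toFun ⟨i + 1, by omega⟩ < z3 from h13.lt).not_ge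
        have upF : UpChain (F.toFun ⟨i + 1, by omega⟩) (n - (i + 1)) :=
          maxChain_upchain F (i + 1) (by omega)
        have hsub : n - (i + 1) = (n - i - 2) + 1 := by omega
        rw [hsub] at upF
        obtain ⟨e, he0, hes, hem⟩ := upchain_step hlc _ _ _ h13 upF
        -- build G and G'
        have hG0 : ∀ (C : MaxChain P n),
            (fun j => if hj : j ≤ i + 1 then C.toFun ⟨j, by omega⟩
              else e (j - (i + 2))) 0 = ⊥ := by
          intro C
          simp only [Nat.zero_le, dite_true]
          have : C.toFun ⟨0, by omega⟩ = C.toFun 0 := toFun_congr C _ _ rfl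
          rw [show (⟨0, by omega⟩ : Fin (n + 1)) = 0 from Fin.ext (by simp), C.first]
        have hGs : ∀ (C : MaxChain P n), C.toFun ⟨i + 1, by omega⟩ ⋖ z3 →
            ∀ j < n, (fun j => if hj : j ≤ i + 1 then C.toFun ⟨j, by omega⟩
              else e (j - (i + 2))) j ⋖ (fun j => if hj : j ≤ i + 1 then C.toFun ⟨j, by omega⟩
              else e (j - (i + 2))) (j + 1) := by
          intro C hC j hj
          rcases Nat.lt_or_ge j (i + 1) with h1 | h1
          · simp only [show j ≤ i + 1 by omega, dite_true, show j + 1 ≤ i + 1 by omega]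
            exact C.step ⟨j, by omega⟩
          · rcases Nat.eq_or_lt_of_le h1 with h2 | h2
            · simp only [show j ≤ i + 1 by omega, dite_true,
                show ¬ (j + 1 ≤ i + 1) by omega, dite_false]
              have hj2 : j + 1 - (i + 2) = 0 := by omega
              rw [hj2, he0]
              have : C.toFun ⟨j, by omega⟩ = C.toFun ⟨i + 1, by omega⟩ :=
                toFun_congr C _ _ h2.symm
              rw [this]; exact hC
            · simp only [show ¬ (j ≤ i + 1) by omega, dite_false,
                show ¬ (j + 1 ≤ i + 1) by omega]
              have : j + 1 - (i + 2) = (j - (i + 2)) + 1 := by omega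
              rw [this]
              exact hes (j - (i + 2)) (by omega)
        have hGm : ∀ (C : MaxChain P n),
            IsMax ((fun j => if hj : j ≤ i + 1 then C.toFun ⟨j, by omega⟩
              else e (j - (i + 2))) n) := by
          intro C
          simp only [show ¬ (n ≤ i + 1) by omega, dite_false]
          have : n - (i + 2) = n - i - 2 := by omega
          rw [this]; exact hem
        set G : MaxChain P n := ofNatFun _ (hG0 F) (hGs F h13) (hGm F) with hGdef
        set G' : MaxChain P n := ofNatFun _ (hG0 F') (hGs F' h23) (hGm F') with hG'def
        have hGval : ∀ j : Fin (n + 1), (j : ℕ) ≤ i + 1 → G.toFun j = F.toFun j := by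
          intro j hj
          show (if hj : (j : ℕ) ≤ i + 1 then F.toFun ⟨j, by omega⟩ else _) = F.toFun j
          simp only [hj, dite_true]
        have hG'val : ∀ j : Fin (n + 1), (j : ℕ) ≤ i + 1 → G'.toFun j = F'.toFun j := by
          intro j hj
          show (if hj : (j : ℕ) ≤ i + 1 then F'.toFun ⟨j, by omega⟩ else _) = F'.toFun j
          simp only [hj, dite_true]
        have hGtail : ∀ j : Fin (n + 1), ¬ ((j : ℕ) ≤ i + 1) →
            G.toFun j = G'.toFun j := by
          intro j hj
          show (if hj : (j : ℕ) ≤ i + 1 then _ else e ((j : ℕ) - (i + 2)))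
            = (if hj : (j : ℕ) ≤ i + 1 then _ else e ((j : ℕ) - (i + 2)))
          simp only [hj, dite_false]
        have hFG : Relation.ReflTransGen MaxChain.Adjacent F G := by
          apply ih
          intro j hj
          exact (hGval j (by omega)).symm
        have hF'G' : Relation.ReflTransGen MaxChain.Adjacent F' G' := by
          apply ih
          intro j hj
          exact (hG'val j (by omega)).symm
        have hadj : G.Adjacent G' := by
          refine ⟨⟨i + 1, by omega⟩, ?_, ?_⟩
          · show G.toFun ⟨i + 1, by omega⟩ ≠ G'.toFun ⟨i + 1, by omega⟩
            rw [hGval ⟨i + 1, by omega⟩ le_rfl, hG'val ⟨i + 1, by omega⟩ le_rfl]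
            exact hne
          · intro y hy
            rcases Nat.lt_or_ge (y : ℕ) (i + 1) with h1 | h1
            · exfalso
              apply hy
              show G.toFun y = G'.toFun y
              rw [hGval y (by omega), hG'val y (by omega)]
              exact h y (by omega)
            · rcases Nat.eq_or_lt_of_le h1 with h2 | h2
              · exact Fin.ext (by simpa using h2.symm)
              · exact absurd (hGtail y (by omega)) hy
        exact hFG.trans ((Relation.ReflTransGen.single hadj).trans
          ((@Relation.ReflTransGen.symmetric _ _ ⟨fun a b h => adj_symm h⟩).symm _ _ hF'G'))

theorem toSeq {n : ℕ} {F F' : MaxChain P n}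
    (h : Relation.ReflTransGen MaxChain.Adjacent F F') :
    ∃ (m : ℕ) (g : Fin (m + 1) → MaxChain P n),
      g 0 = F ∧ g (Fin.last m) = F' ∧
        ∀ i : Fin m, (g i.castSucc).Adjacent (g i.succ) := by
  induction h with
  | refl => exact ⟨0, fun _ => F, rfl, rfl, fun i => i.elim0⟩
  | @tail b c hab hbc ihh =>
    obtain ⟨m, g, hg0, hgl, hgs⟩ := ihh
    refine ⟨m + 1, fun j => if hj : (j : ℕ) < m + 1 then g ⟨j, hj⟩ else c, ?_, ?_, ?_⟩
    · simp only [Fin.val_zero, Nat.succ_pos, dite_true]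
      exact hg0
    · simp [Fin.val_last]
    · intro i
      rcases Nat.lt_or_ge (i : ℕ) m with h1 | h1
      · have e1 : ((i.castSucc : Fin (m + 2)) : ℕ) = (i : ℕ) := rfl
        have e2 : ((i.succ : Fin (m + 2)) : ℕ) = (i : ℕ) + 1 := rfl
        simp only [e1, e2, show (i : ℕ) < m + 1 by omega, dite_true,
          show (i : ℕ) + 1 < m + 1 by omega]
        exact hgs ⟨(i : ℕ), h1⟩
      · have h2 : (i : ℕ) = m := by have := i.isLt; omega
        have e1 : ((i.castSucc : Fin (m + 2)) : ℕ) = m := by simp [h2]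
        have e2 : ((i.succ : Fin (m + 2)) : ℕ) = m + 1 := by simp [h2]
        simp only [e1, e2, Nat.lt_succ_self, dite_true, lt_irrefl, dite_false]
        rw [show (⟨m, Nat.lt_succ_self m⟩ : Fin (m + 1)) = Fin.last m from Fin.ext rfl, hgl]
        exact hbc

end Aux

/-- In a finite graded poset with a unique minimal element satisfying the left-covering
condition, any two maximal chains are connected by a finite discrete homotopy. -/
theorem stmt_14 {P : Type*} [Fintype P] [PartialOrder P] [OrderBot P] [GradeOrder ℕ P]
    (hlc : LeftCovering P) (n : ℕ) (F F' : MaxChain P n) :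
    ∃ (m : ℕ) (g : Fin (m + 1) → MaxChain P n),
      g 0 = F ∧ g (Fin.last m) = F' ∧
        ∀ i : Fin m, (g i.castSucc).Adjacent (g i.succ) := by
  exact toSeq (key hlc n (n + 1) F F' (fun j hj => by omega))
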